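/- Fix an integer N ≥ 1 and define, for t ∈ (0,1), the complex (N+2)×(N+2) matrix P(t) with rows and columns indexed by 0,…,N+1, given by: P(t)_{0,0} = 1; P(t)_{1,0} = 0; P(t)_{i,0} = (−1)^i (2πi)^{1−i} Li_{i−1}(t) for 2 ≤ i ≤ N+1; P(t)_{i,j} = (−log t/(2πi))^{i−j}/(i−j)! for 1 ≤ j ≤ i ≤ N+1; and P(t)_{i,j} = 0 in all remaining cases. Then the matrix-valued function P is differentiable on (0,1) and satisfies the first-order differential equation P′(t) = (B₀/t + B₁/(1−t)) · P(t), where B₀ = −(1/(2πi)) Σ_{i=1}^{N} E_{i+1,i} and B₁ = (1/(2πi)) E_{2,0}, with E_{a,b} the elementary matrix having a 1 in position (a,b) and 0 elsewhere. (P is the period matrix describing the polylogarithmic variation: its columns form a flat basis expressed in the holomorphic frame (f, e_0, e_1, …).) -/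

import Mathlib

open scoped Nat

/-- The polylogarithm power series `Li_j(t) = ∑_{k ≥ 1} t^k / k^j` for real `t ∈ (0,1)`,
viewed as a complex number. -/
noncomputable def LiSeries (j : ℕ) (t : ℝ) : ℂ :=
  ∑' k : ℕ, (t : ℂ) ^ (k + 1) / ((k + 1 : ℕ) : ℂ) ^ j

/-- The period matrix `P(t)` of the polylogarithm, of size `(N+2) × (N+2)`, with rows and
columns indexed by `0, …, N+1`:  `P(t)_{0,0} = 1`, `P(t)_{1,0} = 0`,
`P(t)_{i,0} = (-1)^i (2πi)^{1-i} Li_{i-1}(t)` for `2 ≤ i ≤ N+1`,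
`P(t)_{i,j} = (-log t/(2πi))^{i-j}/(i-j)!` for `1 ≤ j ≤ i ≤ N+1`, and `0` otherwise. -/
noncomputable def Pmat (N : ℕ) (t : ℝ) : Matrix (Fin (N + 2)) (Fin (N + 2)) ℂ :=
  fun i j =>
    if (j : ℕ) = 0 then
      if (i : ℕ) = 0 then 1
      else if (i : ℕ) = 1 then 0
      else (-1) ^ (i : ℕ) * (2 * Real.pi * Complex.I) ^ (1 - (i : ℤ)) *
        LiSeries ((i : ℕ) - 1) t
    else if (j : ℕ) ≤ (i : ℕ) then
      ((-Real.log t : ℂ) / (2 * Real.pi * Complex.I)) ^ ((i : ℕ) - (j : ℕ)) /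
        (Nat.factorial ((i : ℕ) - (j : ℕ)) : ℂ)
    else 0

open Fin.NatCast in
/-- `B₀ = -(1/(2πi)) ∑_{i=1}^{N} E_{i+1,i}`. -/
noncomputable def Bzero (N : ℕ) : Matrix (Fin (N + 2)) (Fin (N + 2)) ℂ :=
  (-(1 / (2 * Real.pi * Complex.I))) •
    ∑ i ∈ Finset.Icc 1 N,
      Matrix.single ((i + 1 : ℕ) : Fin (N + 2)) ((i : ℕ) : Fin (N + 2)) 1

open Fin.NatCast in
/-- `B₁ = (1/(2πi)) E_{2,0}`. -/
noncomputable def Bone (N : ℕ) : Matrix (Fin (N + 2)) (Fin (N + 2)) ℂ :=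
  (1 / (2 * Real.pi * Complex.I)) •
    Matrix.single ((2 : ℕ) : Fin (N + 2)) ((0 : ℕ) : Fin (N + 2)) 1

lemma liSeries_summable (j : ℕ) {t : ℝ} (ht : |t| < 1) :
    Summable fun k : ℕ => (t : ℂ) ^ (k + 1) / ((k + 1 : ℕ) : ℂ) ^ j := by
  apply Summable.of_norm
  have h := summable_geometric_of_lt_one (abs_nonneg t) ht
  apply Summable.of_nonneg_of_le (fun k => norm_nonneg _) (fun k => ?_) (h.mul_left |t|)
  rw [norm_div, norm_pow, norm_pow]
  have hnk : ‖((k + 1 : ℕ) : ℂ)‖ = ((k:ℝ)+1) := by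
    rw [Complex.norm_natCast]; push_cast; ring
  have h1 : (1:ℝ) ≤ ‖((k + 1 : ℕ) : ℂ)‖ := by
    rw [hnk]; linarith [Nat.cast_nonneg (α := ℝ) k]
  calc ‖(t:ℂ)‖ ^ (k+1) / ‖((k + 1 : ℕ) : ℂ)‖ ^ j ≤ ‖(t:ℂ)‖ ^ (k+1) / 1 := by
        exact div_le_div_of_nonneg_left (by positivity) one_pos (one_le_pow₀ h1)
    _ = |t| * |t| ^ k := by simp [Complex.norm_real, pow_succ, abs_nonneg, mul_comm]

lemma hasDerivAt_liSeries (j : ℕ) {t : ℝ} (ht : t ∈ Set.Ioo (0:ℝ) 1) :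
    HasDerivAt (LiSeries (j + 1)) (LiSeries j t / t) t := by
  obtain ⟨ht0, ht1⟩ := ht
  set c : ℝ := (t + 1) / 2 with hc
  have hc0 : 0 < c := by positivity
  have hc1 : c < 1 := by linarith
  have htc : t < c := by linarith
  have key : HasDerivAt (LiSeries (j+1))
      (∑' k : ℕ, (((k+1 : ℕ) : ℂ) * (t:ℂ) ^ k / ((k + 1 : ℕ) : ℂ) ^ (j+1))) t := by
    show HasDerivAt (fun s : ℝ => ∑' k : ℕ, (s : ℂ) ^ (k + 1) / ((k + 1 : ℕ) : ℂ) ^ (j+1)) _ t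
    apply hasDerivAt_tsum_of_isPreconnected
      (g := fun (k : ℕ) (s : ℝ) => (s : ℂ) ^ (k + 1) / ((k + 1 : ℕ) : ℂ) ^ (j+1))
      (g' := fun (k : ℕ) (s : ℝ) => ((k + 1 : ℕ) : ℂ) * (s : ℂ) ^ k / ((k + 1 : ℕ) : ℂ) ^ (j+1))
      (u := fun k : ℕ => (k+1 : ℝ) * c ^ k) (t := Set.Ioo (-c) c) (y₀ := 0)
    · have h1 : Summable fun k : ℕ => (k:ℝ) * c ^ k := by
        simpa using summable_pow_mul_geometric_of_norm_lt_one 1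
          (r := c) (by rw [Real.norm_eq_abs, abs_of_pos hc0]; exact hc1)
      have h2 : Summable fun k : ℕ => c ^ k :=
        summable_geometric_of_lt_one hc0.le hc1
      simpa [add_mul] using h1.add h2
    · exact isOpen_Ioo
    · exact isPreconnected_Ioo
    · intro k y _
      have : HasDerivAt (fun s : ℝ => (s:ℂ) ^ (k+1))
          (((k+1 : ℕ):ℂ) * (y:ℂ) ^ k) y := by
        have := (hasDerivAt_pow (k+1) (y:ℂ)).comp_ofReal
        simpa using this
      simpa [div_eq_mul_inv, mul_comm, mul_assoc, mul_left_comm] using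
        this.div_const (((k + 1 : ℕ) : ℂ) ^ (j+1))
    · intro k y hy
      rw [norm_div, norm_mul, norm_pow, norm_pow]
      have hnk : ‖((k + 1 : ℕ) : ℂ)‖ = ((k:ℝ)+1) := by
        rw [Complex.norm_natCast]; push_cast; ring
      have h1 : (1:ℝ) ≤ ‖((k + 1 : ℕ) : ℂ)‖ := by
        rw [hnk]; linarith [Nat.cast_nonneg (α := ℝ) k]
      have hyc : ‖(y:ℂ)‖ ≤ c := by
        rw [Complex.norm_real, Real.norm_eq_abs, abs_le]
        exact ⟨hy.1.le, hy.2.le⟩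
      calc ‖((k+1:ℕ):ℂ)‖ * ‖(y:ℂ)‖ ^ k / ‖((k + 1 : ℕ) : ℂ)‖ ^ (j+1)
          ≤ ‖((k+1:ℕ):ℂ)‖ * ‖(y:ℂ)‖ ^ k / 1 := by
            exact div_le_div_of_nonneg_left (by positivity) one_pos (one_le_pow₀ h1)
        _ = (k+1:ℝ) * ‖(y:ℂ)‖ ^ k := by rw [hnk]; ring
        _ ≤ (k+1:ℝ) * c ^ k := by
            apply mul_le_mul_of_nonneg_left (pow_le_pow_left₀ (norm_nonneg _) hyc k)
              (by positivity)
    · exact Set.mem_Ioo.2 ⟨by linarith, hc0⟩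
    · apply summable_of_ne_finset_zero (s := ∅); intro k _; simp
    · exact Set.mem_Ioo.2 ⟨by linarith, htc⟩
  convert key using 1
  rw [LiSeries, div_eq_iff (show (t:ℂ) ≠ 0 by exact_mod_cast ht0.ne')]
  rw [← tsum_mul_right]
  congr 1; ext k
  have hk : ((k + 1 : ℕ) : ℂ) ≠ 0 := by exact_mod_cast Nat.succ_ne_zero k
  rw [div_mul_eq_mul_div, div_eq_div_iff (pow_ne_zero j hk) (pow_ne_zero (j+1) hk),
    pow_succ ((k+1:ℕ):ℂ) j, pow_succ (t:ℂ) k]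
  ring

lemma liSeries_zero {t : ℝ} (ht : t ∈ Set.Ioo (0:ℝ) 1) :
    LiSeries 0 t = t / (1 - t) := by
  have hnorm : ‖(t:ℂ)‖ < 1 := by
    rw [Complex.norm_real, Real.norm_eq_abs, abs_of_pos ht.1]; exact ht.2
  rw [LiSeries]
  simp only [pow_zero, div_one, pow_succ']
  rw [tsum_mul_left, tsum_geometric_of_norm_lt_one hnorm]
  rw [div_eq_mul_inv]

/-- The entry function of `Pmat`, as a function of natural indices. -/
noncomputable def pent (t : ℝ) (i j : ℕ) : ℂ :=
  if j = 0 then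
    if i = 0 then 1
    else if i = 1 then 0
    else (-1) ^ i * (2 * Real.pi * Complex.I) ^ (1 - (i : ℤ)) * LiSeries (i - 1) t
  else if j ≤ i then
    ((-Real.log t : ℂ) / (2 * Real.pi * Complex.I)) ^ (i - j) / (Nat.factorial (i - j) : ℂ)
  else 0

lemma Pmat_apply (N : ℕ) (t : ℝ) (i j : Fin (N + 2)) :
    Pmat N t i j = pent t (i : ℕ) (j : ℕ) := rfl

lemma std_mul_apply {n : ℕ} (a b i j : Fin n) (M : Matrix (Fin n) (Fin n) ℂ) :
    (Matrix.single a b (1 : ℂ) * M) i j = if i = a then M b j else 0 := by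
  by_cases h : i = a
  · subst h; simp
  · simp [h]

open Fin.NatCast in
lemma rhs_eq (N : ℕ) (hN : 1 ≤ N) (t : ℝ) (i j : Fin (N + 2)) :
    ((((t : ℂ)⁻¹ • Bzero N) + (((1 : ℂ) - (t : ℂ))⁻¹ • Bone N)) * Pmat N t) i j
    = (if 2 ≤ (i : ℕ) then
        (t : ℂ)⁻¹ * (-(1 / (2 * Real.pi * Complex.I))) * pent t ((i : ℕ) - 1) (j : ℕ)
      else 0)
    + (if (i : ℕ) = 2 then
        ((1 : ℂ) - (t : ℂ))⁻¹ * (1 / (2 * Real.pi * Complex.I)) * pent t 0 (j : ℕ)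
      else 0) := by
  rw [Matrix.add_mul, Matrix.add_apply]
  congr 1
  · -- B₀ part
    rw [Bzero, Matrix.smul_mul, Matrix.smul_mul, Matrix.smul_apply, Matrix.smul_apply,
      smul_eq_mul, smul_eq_mul, Matrix.sum_mul, Matrix.sum_apply]
    have hsum : ∑ k ∈ Finset.Icc 1 N,
        (Matrix.single ((k + 1 : ℕ) : Fin (N + 2)) ((k : ℕ) : Fin (N + 2)) (1 : ℂ)
          * Pmat N t) i j
        = if 2 ≤ (i : ℕ) then pent t ((i : ℕ) - 1) (j : ℕ) else 0 := by
      by_cases h2 : 2 ≤ (i : ℕ)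
      · rw [if_pos h2]
        have hlt : (i : ℕ) - 1 + 1 < N + 2 := by omega
        have hlt2 : (i : ℕ) - 1 < N + 2 := by omega
        rw [Finset.sum_eq_single ((i : ℕ) - 1)]
        · rw [std_mul_apply, if_pos, Pmat_apply]
          · congr 1
            exact Fin.val_cast_of_lt hlt2
          · apply Fin.ext
            rw [Fin.val_cast_of_lt hlt]
            omega
        · intro k hk hne
          rw [std_mul_apply, if_neg]
          intro hik
          apply hne
          have := congrArg Fin.val hik
          rw [Fin.val_cast_of_lt (by simp at hk; omega)] at this
          omega
        · intro hmem
          exfalso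
          apply hmem
          simp only [Finset.mem_Icc]
          have := i.isLt
          omega
      · rw [if_neg h2]
        apply Finset.sum_eq_zero
        intro k hk
        rw [std_mul_apply, if_neg]
        intro hik
        have := congrArg Fin.val hik
        simp only [Finset.mem_Icc] at hk
        rw [Fin.val_cast_of_lt (by omega)] at this
        omega
    rw [hsum]
    by_cases h2 : 2 ≤ (i : ℕ) <;> simp [h2] <;> ring
  · -- B₁ part
    rw [Bone, Matrix.smul_mul, Matrix.smul_mul, Matrix.smul_apply, Matrix.smul_apply,
      smul_eq_mul, smul_eq_mul, std_mul_apply]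
    have h2v : (((2 : ℕ) : Fin (N + 2)) : ℕ) = 2 := Fin.val_cast_of_lt (by omega)
    have h0v : (((0 : ℕ) : Fin (N + 2)) : ℕ) = 0 := Fin.val_cast_of_lt (by omega)
    by_cases h : (i : ℕ) = 2
    · rw [if_pos (Fin.ext (by rw [h2v]; exact h)), if_pos h, Pmat_apply, h0v]
      ring
    · have hne : ¬ i = ((2 : ℕ) : Fin (N + 2)) := fun hik => h (by rw [hik]; exact h2v)
      rw [if_neg hne, if_neg h]; simp


/-- For `N ≥ 1`, the period matrix `P` is differentiable on `(0,1)` (entrywise) and satisfies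
the differential equation `P'(t) = (B₀/t + B₁/(1-t)) · P(t)`. -/
theorem period_matrix_ode (N : ℕ) (hN : 1 ≤ N) (t : ℝ) (ht : t ∈ Set.Ioo (0 : ℝ) 1)
    (i j : Fin (N + 2)) :
    HasDerivAt (fun s : ℝ => Pmat N s i j)
      (((((t : ℂ)⁻¹ • Bzero N) + (((1 : ℂ) - (t : ℂ))⁻¹ • Bone N)) * Pmat N t) i j) t := by
  obtain ⟨ht0, ht1⟩ := ht
  have htC : (t : ℂ) ≠ 0 := by exact_mod_cast ht0.ne'
  have h1tC : (1 : ℂ) - (t : ℂ) ≠ 0 := by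
    rw [sub_ne_zero]
    exact_mod_cast ht1.ne'
  have hc : (2 * Real.pi * Complex.I : ℂ) ≠ 0 := by
    simp [Real.pi_ne_zero, Complex.I_ne_zero]
  rw [rhs_eq N hN t i j]
  have hfun : (fun s : ℝ => Pmat N s i j) = fun s : ℝ => pent s (i : ℕ) (j : ℕ) := rfl
  rw [hfun]
  obtain ⟨iv, hiv⟩ := i
  obtain ⟨jv, hjv⟩ := j
  simp only [Fin.val_mk] at *
  clear hfun
  have zp : ∀ k : ℕ, (2 * Real.pi * Complex.I : ℂ) ^ (1 - ((k + 2 : ℕ) : ℤ))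
      = ((2 * Real.pi * Complex.I : ℂ) ^ (k + 1))⁻¹ := by
    intro k
    rw [show (1 - ((k + 2 : ℕ) : ℤ)) = -((k + 1 : ℕ) : ℤ) by push_cast; ring,
      zpow_neg, zpow_natCast]
  rcases jv with _ | n
  · -- column 0
    rcases iv with _ | _ | m
    · simpa [pent] using hasDerivAt_const t (1 : ℂ)
    · simpa [pent] using hasDerivAt_const t (0 : ℂ)
    · -- iv = m + 2
      set C : ℂ := (-1 : ℂ) ^ (m + 2) * (2 * Real.pi * Complex.I) ^ (1 - ((m + 2 : ℕ) : ℤ))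
        with hC
      have hfun2 : (fun s : ℝ => pent s (m + 2) 0) = fun s : ℝ => C * LiSeries (m + 1) s := by
        funext s
        rw [pent, if_pos rfl, if_neg (by omega), if_neg (by omega)]
        push_cast
        rfl
      rw [hfun2]
      have hder := (hasDerivAt_liSeries m ⟨ht0, ht1⟩).const_mul C
      refine hder.congr_deriv (Eq.symm ?_)
      rw [if_pos (by omega : 2 ≤ m + 2)]
      rcases m with _ | p
      · -- iv = 2
        rw [if_pos rfl, liSeries_zero ⟨ht0, ht1⟩]
        have hp1 : pent t (0 + 2 - 1) 0 = 0 := by rw [pent, if_pos rfl]; norm_num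
        have hp0 : pent t 0 0 = 1 := by rw [pent, if_pos rfl, if_pos rfl]
        rw [hp1, hp0, hC, zp 0]
        field_simp
        ring
      · -- iv = p + 3
        rw [if_neg (by omega), add_zero]
        have hp : pent t (p + 1 + 2 - 1) 0
            = (-1 : ℂ) ^ (p + 2) * (2 * Real.pi * Complex.I) ^ (1 - ((p + 2 : ℕ) : ℤ))
              * LiSeries (p + 1) t := by
          rw [pent, if_pos rfl, if_neg (by omega), if_neg (by omega)]
          norm_num
        rw [hp, hC, zp p, zp (p + 1)]
        field_simp
        ring
  · -- column n + 1
    have hp0 : pent t 0 (n + 1) = 0 := by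
      rw [pent, if_neg (by omega), if_neg (by omega)]
    rcases lt_trichotomy iv (n + 1) with hlt | heq | hgt
    · -- zero entry
      have hfun2 : (fun s : ℝ => pent s iv (n + 1)) = fun _ : ℝ => (0 : ℂ) := by
        funext s
        rw [pent, if_neg (by omega), if_neg (by omega)]
      rw [hfun2]
      have hz1 : (if 2 ≤ iv then
          (t : ℂ)⁻¹ * -(1 / (2 * Real.pi * Complex.I)) * pent t (iv - 1) (n + 1) else 0)
          = 0 := by
        by_cases h2 : 2 ≤ iv
        · rw [if_pos h2, pent, if_neg (by omega), if_neg (by omega), mul_zero]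
        · rw [if_neg h2]
      rw [hz1, hp0]
      simpa using hasDerivAt_const t (0 : ℂ)
    · -- diagonal entry
      have hfun2 : (fun s : ℝ => pent s iv (n + 1)) = fun _ : ℝ => (1 : ℂ) := by
        funext s
        rw [pent, if_neg (by omega), if_pos (by omega), show iv - (n + 1) = 0 by omega]
        norm_num
      rw [hfun2]
      have hz1 : (if 2 ≤ iv then
          (t : ℂ)⁻¹ * -(1 / (2 * Real.pi * Complex.I)) * pent t (iv - 1) (n + 1) else 0)
          = 0 := by
        by_cases h2 : 2 ≤ iv
        · rw [if_pos h2, pent, if_neg (by omega), if_neg (by omega), mul_zero]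
        · rw [if_neg h2]
      rw [hz1, hp0]
      simpa using hasDerivAt_const t (1 : ℂ)
    · -- below diagonal
      obtain ⟨d, rfl⟩ : ∃ d, iv = n + 1 + (d + 1) := ⟨iv - (n + 2), by omega⟩
      have hfun2 : (fun s : ℝ => pent s (n + 1 + (d + 1)) (n + 1))
          = fun s : ℝ => ((-Real.log s : ℂ) / (2 * Real.pi * Complex.I)) ^ (d + 1)
              / (Nat.factorial (d + 1) : ℂ) := by
        funext s
        rw [pent, if_neg (by omega), if_pos (by omega),
          show n + 1 + (d + 1) - (n + 1) = d + 1 by omega]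
      rw [hfun2]
      have hL : HasDerivAt (fun s : ℝ => (-Real.log s : ℂ) / (2 * Real.pi * Complex.I))
          ((-(t⁻¹ : ℝ) : ℂ) / (2 * Real.pi * Complex.I)) t := by
        have := ((Real.hasDerivAt_log ht0.ne').ofReal_comp).neg.div_const
          (2 * Real.pi * Complex.I)
        refine this.congr_deriv ?_
        push_cast
        ring
      have hpow := (HasDerivAt.scomp (x := t)
        (hasDerivAt_pow (d + 1)
          ((-Real.log t : ℂ) / (2 * Real.pi * Complex.I))) hL).div_const
        (Nat.factorial (d + 1) : ℂ)
      have hpow' : HasDerivAt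
          (fun s : ℝ => ((-Real.log s : ℂ) / (2 * Real.pi * Complex.I)) ^ (d + 1)
            / (Nat.factorial (d + 1) : ℂ))
          ((((-(t⁻¹ : ℝ) : ℂ) / (2 * Real.pi * Complex.I)) •
            (((d + 1 : ℕ) : ℂ)
              * ((-Real.log t : ℂ) / (2 * Real.pi * Complex.I)) ^ (d + 1 - 1)))
            / (Nat.factorial (d + 1) : ℂ)) t := hpow
      convert hpow' using 1
      rw [if_pos (by omega : 2 ≤ n + 1 + (d + 1))]
      have hT2 : (if n + 1 + (d + 1) = 2 then
          ((1 : ℂ) - (t : ℂ))⁻¹ * (1 / (2 * Real.pi * Complex.I)) * pent t 0 (n + 1)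
          else 0) = 0 := by
        rw [hp0]
        split <;> simp
      rw [hT2, add_zero]
      have hpent : pent t (n + 1 + (d + 1) - 1) (n + 1)
          = ((-Real.log t : ℂ) / (2 * Real.pi * Complex.I)) ^ d
            / (Nat.factorial d : ℂ) := by
        rw [pent, if_neg (by omega), if_pos (by omega),
          show n + 1 + (d + 1) - 1 - (n + 1) = d by omega]
      rw [hpent, smul_eq_mul, show d + 1 - 1 = d from rfl]
      have hfact : ((Nat.factorial d : ℕ) : ℂ) ≠ 0 :=
        Nat.cast_ne_zero.2 (Nat.factorial_ne_zero d)
      have hfac1 : ((Nat.factorial (d + 1) : ℕ) : ℂ) = ((d : ℂ) + 1) * (Nat.factorial d : ℂ) := by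
        rw [Nat.factorial_succ]; push_cast; ring
      have hd1 : ((d : ℂ) + 1) ≠ 0 := by exact_mod_cast Nat.succ_ne_zero d
      rw [hfac1]
      push_cast
      field_simp [hfact, hd1]
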